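/- Let E(x) ⊆ [0,ζ] be Borel sets indexed by x ∈ ℝ^d with λ(E(x) Δ E(x')) ≤ κ‖x − x'‖ (λ Lebesgue measure, Δ symmetric difference). Let η be a finite measure on [0,ζ] with η ≪ λ and ∫ ℓ(dη/dλ) dλ < ∞ where ℓ(v) = v log v − v + 1. Then for every M ≥ 1 and x, x' ∈ ℝ^d, |η(E(x)) − η(E(x'))| ≤ e^M·κ·‖x − x'‖ + (1/M)·∫_{[0,ζ]} ℓ(dη/dλ) dλ. -/

import Mathlib

open MeasureTheory

/-- `ℓ(x) = x log x − x + 1` (with the convention `0·log 0 = 0`). -/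
noncomputable def ell (x : ℝ) : ℝ := x * Real.log x - x + 1

lemma ell_nonneg {x : ℝ} (hx : 0 ≤ x) : 0 ≤ ell x := by
  rcases eq_or_lt_of_le hx with h | h
  · simp [ell, ← h]
  · have h1 : Real.log x⁻¹ ≤ x⁻¹ - 1 := Real.log_le_sub_one_of_pos (by positivity)
    rw [Real.log_inv] at h1
    have h2 : 1 - x⁻¹ ≤ Real.log x := by linarith
    have h3 : x * (1 - x⁻¹) ≤ x * Real.log x :=
      mul_le_mul_of_nonneg_left h2 h.le
    have h4 : x * (1 - x⁻¹) = x - 1 := by field_simp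
    unfold ell; nlinarith

lemma key_ineq {v M : ℝ} (hv : 0 ≤ v) (hM : 1 ≤ M) :
    v ≤ Real.exp M + ell v / M := by
  have hM0 : 0 < M := lt_of_lt_of_le zero_lt_one hM
  by_cases h : v ≤ Real.exp M
  · have h1 := ell_nonneg hv
    have h2 : 0 ≤ ell v / M := by positivity
    linarith
  · push_neg at h
    have hv0 : 0 < v := lt_trans (Real.exp_pos M) h
    set t := Real.log v - M with ht
    have hlog : Real.log v = M + t := by ring
    have ht0 : 0 ≤ t := by
      have := Real.log_lt_log (Real.exp_pos M) h
      rw [Real.log_exp] at this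
      linarith
    have hveq : v = Real.exp M * Real.exp t := by
      rw [← Real.exp_add, ← hlog, Real.exp_log hv0]
    have hBt : Real.exp t * (1 - t) ≤ 1 := by
      have h1 := Real.add_one_le_exp (-t)
      have h2 : Real.exp t * (1 - t) ≤ Real.exp t * Real.exp (-t) :=
        mul_le_mul_of_nonneg_left (by linarith) (Real.exp_pos t).le
      rwa [← Real.exp_add, add_neg_cancel, Real.exp_zero] at h2
    have hA : 0 < Real.exp M := Real.exp_pos M
    have hB : (1:ℝ) ≤ Real.exp t := Real.one_le_exp ht0
    rw [← sub_le_iff_le_add', le_div_iff₀ hM0]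
    unfold ell
    rw [hlog, hveq]
    nlinarith [mul_le_mul_of_nonneg_left hBt hA.le]

theorem controlled_rate_modulus
    {d : ℕ} (ζ κ : ℝ) (hζ : 0 < ζ) (hκ : 0 < κ)
    (E : EuclideanSpace ℝ (Fin d) → Set ℝ)
    (hE_meas : ∀ x, MeasurableSet (E x))
    (hE_sub : ∀ x, E x ⊆ Set.Icc 0 ζ)
    (hE_lip : ∀ x x', (volume (symmDiff (E x) (E x'))).toReal ≤ κ * ‖x - x'‖)
    (f : ℝ → ℝ) (hf_nonneg : ∀ z, 0 ≤ f z)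
    (hf_int : IntegrableOn f (Set.Icc 0 ζ))
    (hℓf_int : IntegrableOn (fun z => ell (f z)) (Set.Icc 0 ζ))
    (M : ℝ) (hM : 1 ≤ M) (x x' : EuclideanSpace ℝ (Fin d)) :
    |(∫ z in E x, f z) - ∫ z in E x', f z|
      ≤ Real.exp M * κ * ‖x - x'‖ + (1 / M) * ∫ z in Set.Icc 0 ζ, ell (f z) := by
  have hM0 : 0 < M := lt_of_lt_of_le zero_lt_one hM
  set A := E x with hA_def
  set B := E x' with hB_def
  have hA : MeasurableSet A := hE_meas x
  have hB : MeasurableSet B := hE_meas x'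
  have hsubA : A ⊆ Set.Icc 0 ζ := hE_sub x
  have hsubB : B ⊆ Set.Icc 0 ζ := hE_sub x'
  set S := symmDiff A B with hS_def
  have hSdef : S = A \ B ∪ B \ A := Set.symmDiff_def A B
  have hS : S ⊆ Set.Icc 0 ζ := by
    rw [hSdef]
    exact Set.union_subset ((Set.diff_subset).trans hsubA)
      ((Set.diff_subset).trans hsubB)
  have hSmeas : MeasurableSet S := hA.symmDiff hB
  have hfinS : volume S < ⊤ :=
    lt_of_le_of_lt (measure_mono hS) measure_Icc_lt_top
  -- integrabilities
  have hfA : IntegrableOn f A := hf_int.mono_set hsubA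
  have hfB : IntegrableOn f B := hf_int.mono_set hsubB
  have hfS : IntegrableOn f S := hf_int.mono_set hS
  have hℓS : IntegrableOn (fun z => ell (f z)) S := hℓf_int.mono_set hS
  have hgS : IntegrableOn (fun z => Real.exp M + ell (f z) / M) S := by
    refine Integrable.add ?_ (hℓS.div_const M)
    exact (integrableOn_const_iff).mpr (Or.inr hfinS)
  -- difference identity
  have h1 : (∫ z in A, f z) - ∫ z in B, f z
      = (∫ z in A \ B, f z) - ∫ z in B \ A, f z := by
    have hAint : (∫ z in A ∩ B, f z) + ∫ z in A \ B, f z = ∫ z in A, f z :=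
      integral_inter_add_diff hB hfA
    have hBint : (∫ z in B ∩ A, f z) + ∫ z in B \ A, f z = ∫ z in B, f z :=
      integral_inter_add_diff hA hfB
    rw [Set.inter_comm B A] at hBint
    linarith
  have hnn1 : 0 ≤ ∫ z in A \ B, f z :=
    setIntegral_nonneg (hA.diff hB) (fun z _ => hf_nonneg z)
  have hnn2 : 0 ≤ ∫ z in B \ A, f z :=
    setIntegral_nonneg (hB.diff hA) (fun z _ => hf_nonneg z)
  have hsum : (∫ z in A \ B, f z) + ∫ z in B \ A, f z = ∫ z in S, f z := by
    rw [hSdef] at hfS ⊢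
    exact (setIntegral_union disjoint_sdiff_sdiff (hB.diff hA)
      (hfS.mono_set Set.subset_union_left)
      (hfS.mono_set Set.subset_union_right)).symm
  have h2 : |(∫ z in A, f z) - ∫ z in B, f z| ≤ ∫ z in S, f z := by
    rw [h1, abs_sub_le_iff]
    constructor <;> linarith
  -- pointwise bound
  have h3 : (∫ z in S, f z) ≤ ∫ z in S, (Real.exp M + ell (f z) / M) :=
    setIntegral_mono_on hfS hgS hSmeas (fun z _ => key_ineq (hf_nonneg z) hM)
  have h4 : (∫ z in S, (Real.exp M + ell (f z) / M))
      = (volume S).toReal * Real.exp M + (1 / M) * ∫ z in S, ell (f z) := by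
    rw [integral_add ((integrableOn_const_iff (C := Real.exp M)).mpr (Or.inr hfinS)) (hℓS.div_const M)]
    rw [setIntegral_const, integral_div]
    ring_nf
    simp [smul_eq_mul]
    rfl
  have h5 : (∫ z in S, ell (f z)) ≤ ∫ z in Set.Icc 0 ζ, ell (f z) := by
    refine setIntegral_mono_set hℓf_int ?_ (HasSubset.Subset.eventuallyLE hS)
    exact ae_of_all _ (fun z => ell_nonneg (hf_nonneg z))
  have h6 : (volume S).toReal * Real.exp M ≤ Real.exp M * κ * ‖x - x'‖ := by
    have := hE_lip x x'
    have hexp : 0 < Real.exp M := Real.exp_pos M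
    calc (volume S).toReal * Real.exp M ≤ (κ * ‖x - x'‖) * Real.exp M :=
          mul_le_mul_of_nonneg_right this hexp.le
      _ = Real.exp M * κ * ‖x - x'‖ := by ring
  have h7 : (1 / M) * (∫ z in S, ell (f z))
      ≤ (1 / M) * ∫ z in Set.Icc 0 ζ, ell (f z) :=
    mul_le_mul_of_nonneg_left h5 (by positivity)
  linarith
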